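/- arXiv:2401.16493 — 2 statements merged into one kernel-verified Lean document; each statement's English description precedes it below -/
import Mathlib

section
/- For every n ≥ 1, Σ_{k=1}^n B_{n,k} = ((n+1)/2) * C_n and Σ_{k=1}^{n+1} A_{n,k} = (n+1) * C_n, where C_n is the n-th Catalan number. -/
noncomputable def catalanTriangleB (n k : ℕ) : ℚ :=
  (k : ℚ) / n * ((2 * n).choose (n - k))

noncomputable def catalanTriangleA (n k : ℕ) : ℚ :=
  ((2 * k - 1 : ℚ)) / (2 * n + 1) * ((2 * n + 1).choose (n + 1 - k))

noncomputable def catalanQ (n : ℕ) : ℚ := ((2 * n).choose n : ℚ) / (n + 1)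

lemma B_telescope (n k : ℕ) (hn : 1 ≤ n) (hk1 : 1 ≤ k) (hkn : k ≤ n) :
    catalanTriangleB n k =
      ((2 * n - 1).choose (n + k - 1) : ℚ) - ((2 * n - 1).choose (n + k) : ℚ) := by
  set a := (2 * n - 1).choose (n + k - 1) with ha
  set b := (2 * n - 1).choose (n + k) with hb
  have h1 : (2 * n).choose (n - k) = a + b := by
    have hsym : (2 * n).choose (n - k) = (2 * n).choose (n + k) := by
      have h2 : n - k = 2 * n - (n + k) := by omega
      rw [h2, Nat.choose_symm (by omega)]
    have h3 : 2 * n = (2 * n - 1) + 1 := by omega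
    have h4 : n + k = (n + k - 1) + 1 := by omega
    rw [hsym, h3, h4, Nat.choose_succ_succ]
    simp [Nat.succ_eq_add_one, ← h4]
    rfl
  have h2 : b * (n + k) = a * (n - k) := by
    have := Nat.choose_succ_right_eq (2 * n - 1) (n + k - 1)
    have h4 : (n + k - 1) + 1 = n + k := by omega
    have h5 : 2 * n - 1 - (n + k - 1) = n - k := by omega
    rw [h4, h5] at this
    exact this
  have h2q : (b : ℚ) * (n + k) = a * ((n : ℚ) - k) := by
    have := congrArg (Nat.cast : ℕ → ℚ) h2
    push_cast [Nat.cast_sub hkn] at this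
    linarith
  have hn0 : (n : ℚ) ≠ 0 := by positivity
  rw [catalanTriangleB, h1]
  push_cast
  field_simp
  ring_nf
  ring_nf at h2q
  nlinarith [h2q]

lemma A_telescope (n k : ℕ) (hk1 : 1 ≤ k) (hkn : k ≤ n + 1) :
    catalanTriangleA n k =
      ((2 * n).choose (n + k - 1) : ℚ) - ((2 * n).choose (n + k) : ℚ) := by
  set a := (2 * n).choose (n + k - 1) with ha
  set b := (2 * n).choose (n + k) with hb
  have h1 : (2 * n + 1).choose (n + 1 - k) = a + b := by
    have hsym : (2 * n + 1).choose (n + 1 - k) = (2 * n + 1).choose (n + k) := by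
      have h2 : n + 1 - k = 2 * n + 1 - (n + k) := by omega
      rw [h2, Nat.choose_symm (by omega)]
    have h4 : n + k = (n + k - 1) + 1 := by omega
    rw [hsym, h4, Nat.choose_succ_succ]
    simp [Nat.succ_eq_add_one, ← h4]
    rfl
  have h2 : b * (n + k) = a * (n + 1 - k) := by
    have := Nat.choose_succ_right_eq (2 * n) (n + k - 1)
    have h4 : (n + k - 1) + 1 = n + k := by omega
    have h5 : 2 * n - (n + k - 1) = n + 1 - k := by omega
    rw [h4, h5] at this
    exact this
  have h2q : (b : ℚ) * (n + k) = a * ((n : ℚ) + 1 - k) := by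
    have := congrArg (Nat.cast : ℕ → ℚ) h2
    push_cast [Nat.cast_sub hkn] at this
    linarith
  have hd : (2 * (n : ℚ) + 1) ≠ 0 := by positivity
  rw [catalanTriangleA, h1]
  push_cast
  field_simp
  ring_nf
  ring_nf at h2q
  nlinarith [h2q]

theorem catalanTriangle_row_sums (n : ℕ) (hn : 1 ≤ n) :
    (∑ k ∈ Finset.Icc 1 n, catalanTriangleB n k) = ((n : ℚ) + 1) / 2 * catalanQ n ∧
      (∑ k ∈ Finset.Icc 1 (n + 1), catalanTriangleA n k) = ((n : ℚ) + 1) * catalanQ n := by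
  have hn0 : (n : ℚ) + 1 ≠ 0 := by positivity
  constructor
  · have hB : ∑ k ∈ Finset.Icc 1 n, catalanTriangleB n k
        = ((2 * n - 1).choose n : ℚ) := by
      rw [← Finset.Ico_add_one_right_eq_Icc, Finset.sum_Ico_eq_sum_range]
      have : ∀ i ∈ Finset.range n, catalanTriangleB n (1 + i)
          = (fun j => ((2 * n - 1).choose (n + j) : ℚ)) i
            - (fun j => ((2 * n - 1).choose (n + j) : ℚ)) (i + 1) := by
        intro i hi
        simp only [Finset.mem_range] at hi
        rw [B_telescope n (1 + i) hn (by omega) (by omega)]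
        have e1 : n + (1 + i) - 1 = n + i := by omega
        have e2 : n + (1 + i) = n + (i + 1) := by omega
        rw [e1, e2]
      simp only [Nat.add_sub_cancel]
      rw [Finset.sum_congr rfl this, Finset.sum_range_sub']
      simp only [Nat.add_zero]
      have : (2 * n - 1).choose (n + n) = 0 :=
        Nat.choose_eq_zero_of_lt (by omega)
      rw [this]
      push_cast
      ring
    rw [hB]
    have hhalf : 2 * (2 * n - 1).choose n = (2 * n).choose n := by
      have h3 : 2 * n = (2 * n - 1) + 1 := by omega
      have h4 : n = (n - 1) + 1 := by omega
      have hsym : (2 * n - 1).choose (n - 1) = (2 * n - 1).choose n := by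
        have h5 : n - 1 = 2 * n - 1 - n := by omega
        rw [h5, Nat.choose_symm (by omega)]
      calc 2 * (2 * n - 1).choose n
          = (2 * n - 1).choose (n - 1) + (2 * n - 1).choose n := by rw [hsym]; ring
        _ = (2 * n).choose n := by
            conv_rhs => rw [h3, h4, Nat.choose_succ_succ]
            simp [Nat.succ_eq_add_one, ← h4]
    rw [catalanQ]
    have := congrArg (Nat.cast : ℕ → ℚ) hhalf
    push_cast at this
    field_simp
    linear_combination this
  · have hA : ∑ k ∈ Finset.Icc 1 (n + 1), catalanTriangleA n k
        = ((2 * n).choose n : ℚ) := by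
      rw [← Finset.Ico_add_one_right_eq_Icc, Finset.sum_Ico_eq_sum_range]
      have : ∀ i ∈ Finset.range (n + 1), catalanTriangleA n (1 + i)
          = (fun j => ((2 * n).choose (n + j) : ℚ)) i
            - (fun j => ((2 * n).choose (n + j) : ℚ)) (i + 1) := by
        intro i hi
        simp only [Finset.mem_range] at hi
        rw [A_telescope n (1 + i) (by omega) (by omega)]
        have e1 : n + (1 + i) - 1 = n + i := by omega
        have e2 : n + (1 + i) = n + (i + 1) := by omega
        rw [e1, e2]
      simp only [Nat.add_sub_cancel]
      rw [Finset.sum_congr rfl this, Finset.sum_range_sub']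
      simp only [Nat.add_zero]
      have : (2 * n).choose (n + (n + 1)) = 0 :=
        Nat.choose_eq_zero_of_lt (by omega)
      rw [this]
      push_cast
      ring
    rw [hA, catalanQ]
    field_simp
end

section
/- For every n ≥ 1, Σ_{k=1}^n (-1)^k B_{n,k} = -C_{n-1} and Σ_{k=1}^{n+1} (-1)^k A_{n,k} = 0, where C_n is the n-th Catalan number. -/
private lemma tele1 (f : ℕ → ℚ) : ∀ m, ∑ k ∈ Finset.Icc 1 m, (f k - f (k - 1)) = f m - f 0
  | 0 => by simp
  | (m + 1) => by
      rw [Finset.sum_Icc_succ_top (by omega), tele1 f m]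
      simp only [Nat.add_sub_cancel]
      ring

private lemma tele2 (f : ℕ → ℚ) : ∀ m, ∑ k ∈ Finset.Icc 1 m, (f k - f (k + 1)) = f 1 - f (m + 1)
  | 0 => by simp
  | (m + 1) => by
      rw [Finset.sum_Icc_succ_top (by omega), tele2 f m]
      ring

private lemma A_eq_BB (n k : ℕ) (hk : 1 ≤ k) (hkn : k ≤ n) :
    catalanTriangleA n k = catalanTriangleB n (k - 1) + catalanTriangleB n k := by
  unfold catalanTriangleA catalanTriangleB
  have hn : 1 ≤ n := le_trans hk hkn
  have h1 : n + 1 - k = (n - k) + 1 := by omega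
  have h2 : n - (k - 1) = (n - k) + 1 := by omega
  have hpascal : (2 * n + 1).choose ((n - k) + 1)
      = (2 * n).choose (n - k) + (2 * n).choose ((n - k) + 1) := by
    have := Nat.choose_succ_succ (2 * n) (n - k)
    simpa using this
  have hratio : (2 * n).choose ((n - k) + 1) * ((n - k) + 1)
      = (2 * n).choose (n - k) * (n + k) := by
    have := Nat.choose_succ_right_eq (2 * n) (n - k)
    have h3 : 2 * n - (n - k) = n + k := by omega
    rw [h3] at this
    exact this
  rw [h1, h2, hpascal]
  set a : ℚ := ((2 * n).choose (n - k) : ℚ) with ha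
  set b : ℚ := ((2 * n).choose ((n - k) + 1) : ℚ) with hb
  have hrel : b * ((n : ℚ) - k + 1) = a * ((n : ℚ) + k) := by
    have := congrArg (fun x : ℕ => (x : ℚ)) hratio
    push_cast at this
    rw [Nat.cast_sub hkn] at this
    linarith [this]
  have hk1 : ((k - 1 : ℕ) : ℚ) = (k : ℚ) - 1 := by
    rw [Nat.cast_sub hk]; norm_num
  have hn0 : (n : ℚ) ≠ 0 := by positivity
  have h2n1 : (2 * (n : ℚ) + 1) ≠ 0 := by positivity
  rw [hk1]
  push_cast
  field_simp
  linear_combination hrel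

private lemma B_eq_AA (n k : ℕ) (hk : 1 ≤ k) (hkn : k < n) :
    catalanTriangleB n k = catalanTriangleA (n - 1) k + catalanTriangleA (n - 1) (k + 1) := by
  unfold catalanTriangleA catalanTriangleB
  have hn : 1 ≤ n := le_trans hk (le_of_lt hkn)
  have e1 : 2 * (n - 1) + 1 = 2 * n - 1 := by omega
  have e2 : (n - 1) + 1 - k = (n - k - 1) + 1 := by omega
  have e3 : (n - 1) + 1 - (k + 1) = n - k - 1 := by omega
  have e4 : n - k = (n - k - 1) + 1 := by omega
  have hpascal : (2 * n).choose ((n - k - 1) + 1)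
      = (2 * n - 1).choose (n - k - 1) + (2 * n - 1).choose ((n - k - 1) + 1) := by
    have h2n : 2 * n = (2 * n - 1) + 1 := by omega
    rw [h2n]
    exact Nat.choose_succ_succ (2 * n - 1) (n - k - 1)
  have hratio : (2 * n - 1).choose ((n - k - 1) + 1) * ((n - k - 1) + 1)
      = (2 * n - 1).choose (n - k - 1) * (n + k) := by
    have := Nat.choose_succ_right_eq (2 * n - 1) (n - k - 1)
    have h3 : (2 * n - 1) - (n - k - 1) = n + k := by omega
    rw [h3] at this
    exact this
  rw [e1, e2, e3, e4, hpascal]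
  set y : ℚ := ((2 * n - 1).choose (n - k - 1) : ℚ) with hy
  set x : ℚ := ((2 * n - 1).choose ((n - k - 1) + 1) : ℚ) with hx
  have hrel : x * ((n : ℚ) - k) = y * ((n : ℚ) + k) := by
    have := congrArg (fun t : ℕ => (t : ℚ)) hratio
    push_cast at this
    have c1 : ((n - k - 1 : ℕ) : ℚ) = (n : ℚ) - k - 1 := by
      rw [Nat.cast_sub (by omega : 1 ≤ n - k), Nat.cast_sub (le_of_lt hkn)]
      norm_num
    rw [c1] at this
    linarith [this]
  have cn1 : ((n - 1 : ℕ) : ℚ) = (n : ℚ) - 1 := by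
    rw [Nat.cast_sub hn]; norm_num
  rw [cn1]
  push_cast
  have hn0 : (n : ℚ) ≠ 0 := by positivity
  have h2n1 : (2 * ((n : ℚ) - 1) + 1) ≠ 0 := by
    have : (1 : ℚ) ≤ (n : ℚ) := by exact_mod_cast hn
    nlinarith
  field_simp
  linear_combination hrel

private lemma B_zero (n : ℕ) : catalanTriangleB n 0 = 0 := by
  simp [catalanTriangleB]

private lemma B_diag (n : ℕ) (hn : 1 ≤ n) : catalanTriangleB n n = 1 := by
  unfold catalanTriangleB
  rw [Nat.sub_self]
  have hn0 : (n : ℚ) ≠ 0 := by positivity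
  simp [div_self hn0]

private lemma A_top (n : ℕ) : catalanTriangleA n (n + 1) = 1 := by
  unfold catalanTriangleA
  rw [Nat.sub_self]
  have h : (2 * (n : ℚ) + 1) ≠ 0 := by positivity
  push_cast
  field_simp
  simp only [Nat.choose_zero_right, Nat.cast_one]
  ring

private lemma A_one (n : ℕ) : catalanTriangleA n 1 = catalanQ n := by
  unfold catalanTriangleA catalanQ
  have h1 : n + 1 - 1 = n := by omega
  rw [h1]
  have key : (2 * n + 1).choose n * (n + 1) = (2 * n).choose n * (2 * n + 1) := by
    have h2 := Nat.add_one_mul_choose_eq (2 * n) n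
    have h3 : (2 * n + 1).choose n = (2 * n + 1).choose (n + 1) := by
      have := Nat.choose_symm (by omega : n + 1 ≤ 2 * n + 1)
      have h4 : 2 * n + 1 - (n + 1) = n := by omega
      rw [h4] at this
      exact this
    rw [h3]
    simpa [Nat.succ_eq_add_one, mul_comm] using h2.symm
  have keyQ : ((2 * n + 1).choose n : ℚ) * ((n : ℚ) + 1)
      = ((2 * n).choose n : ℚ) * (2 * (n : ℚ) + 1) := by
    exact_mod_cast congrArg (fun t : ℕ => (t : ℚ)) key
  have h2n1 : (2 * (n : ℚ) + 1) ≠ 0 := by positivity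
  have hn1 : ((n : ℚ) + 1) ≠ 0 := by positivity
  push_cast
  field_simp
  linear_combination keyQ

theorem catalanTriangle_alternating_row_sums (n : ℕ) (hn : 1 ≤ n) :
    (∑ k ∈ Finset.Icc 1 n, (-1 : ℚ) ^ k * catalanTriangleB n k) = -catalanQ (n - 1) ∧
      (∑ k ∈ Finset.Icc 1 (n + 1), (-1 : ℚ) ^ k * catalanTriangleA n k) = 0 := by
  constructor
  · -- first part
    obtain ⟨m, rfl⟩ : ∃ m, n = m + 1 := ⟨n - 1, by omega⟩
    rw [Finset.sum_Icc_succ_top (by omega)]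
    have hsum : ∑ k ∈ Finset.Icc 1 m, (-1 : ℚ) ^ k * catalanTriangleB (m + 1) k
        = ∑ k ∈ Finset.Icc 1 m,
            (((-1 : ℚ) ^ k * catalanTriangleA m k) - ((-1 : ℚ) ^ (k + 1) * catalanTriangleA m (k + 1))) := by
      apply Finset.sum_congr rfl
      intro k hk
      rw [Finset.mem_Icc] at hk
      have hb := B_eq_AA (m + 1) k hk.1 (by omega)
      simp only [Nat.add_sub_cancel] at hb
      rw [hb]
      ring
    rw [hsum, tele2 (fun k => (-1 : ℚ) ^ k * catalanTriangleA m k) m]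
    rw [A_one m, A_top m, B_diag (m + 1) (by omega)]
    simp only [Nat.add_sub_cancel]
    ring
  · -- second part
    rw [Finset.sum_Icc_succ_top (by omega)]
    have hsum : ∑ k ∈ Finset.Icc 1 n, (-1 : ℚ) ^ k * catalanTriangleA n k
        = ∑ k ∈ Finset.Icc 1 n,
            (((-1 : ℚ) ^ k * catalanTriangleB n k) - ((-1 : ℚ) ^ (k - 1) * catalanTriangleB n (k - 1))) := by
      apply Finset.sum_congr rfl
      intro k hk
      rw [Finset.mem_Icc] at hk
      rw [A_eq_BB n k hk.1 hk.2]
      have hk1 : k - 1 + 1 = k := by omega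
      have hsign : (-1 : ℚ) ^ (k - 1) = -(-1 : ℚ) ^ k := by
        have h := pow_succ (-1 : ℚ) (k - 1)
        rw [hk1] at h
        linarith [h]
      rw [hsign]
      ring
    rw [hsum, tele1 (fun k => (-1 : ℚ) ^ k * catalanTriangleB n k) n]
    rw [B_zero n, B_diag n hn, A_top n]
    ring
end
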